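/- arXiv:1406.5826 — 3 statements merged into one kernel-verified Lean document; each statement's English description precedes it below -/
import Mathlib

section
/- For positive real numbers r_1, ..., r_s, the cyclic product r_1^{r_2} · r_2^{r_3} ⋯ r_{s-1}^{r_s} · r_s^{r_1} is at most r_1^{r_1} · r_2^{r_2} ⋯ r_s^{r_s}. -/
/-- The cyclic product `r_1^{r_2} ⋯ r_{s-1}^{r_s} · r_s^{r_1}` is at most
`r_1^{r_1} ⋯ r_s^{r_s}`, for positive reals `r_i`. (Here `finRotate s` sends `i` to
`i+1` cyclically, so the factor at `i` is `r_i ^ r_{i+1}`.) -/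
theorem cyclic_prod_rpow_le (s : ℕ) (hs : 0 < s) (r : Fin s → ℝ) (hr : ∀ i, 0 < r i) :
    ∏ i : Fin s, r i ^ (r (finRotate s i)) ≤ ∏ i : Fin s, r i ^ (r i) := by
  have hL : (0:ℝ) < ∏ i : Fin s, r i ^ (r (finRotate s i)) :=
    Finset.prod_pos fun i _ => Real.rpow_pos_of_pos (hr i) _
  have hR : (0:ℝ) < ∏ i : Fin s, r i ^ (r i) :=
    Finset.prod_pos fun i _ => Real.rpow_pos_of_pos (hr i) _
  rw [← Real.log_le_log_iff hL hR, Real.log_prod (fun i _ => (Real.rpow_pos_of_pos (hr i) _).ne'),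
    Real.log_prod (fun i _ => (Real.rpow_pos_of_pos (hr i) _).ne')]
  simp_rw [Real.log_rpow (hr _)]
  have hmono : Monovary (fun i => Real.log (r i)) r := fun i j h =>
    Real.log_le_log (hr i) h.le
  have := hmono.sum_smul_comp_perm_le_sum_smul (σ := finRotate s)
  simpa [smul_eq_mul, mul_comm] using this
end

section
/- The number of distinct matrices in GL(n,q) expressible as a product of at most k elementary matrices is at most q^{(k+2n)·log_q n + (3k+n)·log_q 2 + n + k + k·log_q e}. -/
set_option linter.unusedSectionVars false
set_option linter.unreachableTactic false
set_option linter.unusedTactic false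
set_option linter.unusedVariables false
set_option maxHeartbeats 1600000

open Matrix

/-- Permutation matrix of the transposition (i j). -/
def Pswap {F : Type*} [Field F] {n : ℕ} (i j : Fin n) :
    Matrix (Fin n) (Fin n) F :=
  (Equiv.swap i j).permMatrix F

/-- Row scaling elementary matrix: identity with (i,i) entry replaced by c. -/
def Escale {F : Type*} [Field F] {n : ℕ} (i : Fin n) (c : F) :
    Matrix (Fin n) (Fin n) F :=
  Matrix.diagonal (fun t => if t = i then c else 1)

/-- Transvection adding `c` times row `i` to row `j` (entry `c` at position (j,i)). -/
def Eadd {F : Type*} [Field F] {n : ℕ} (i j : Fin n) (c : F) :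
    Matrix (Fin n) (Fin n) F :=
  1 + Matrix.single j i c

/-- A matrix is elementary if it is a transposition matrix, a nonzero row scaling,
or a transvection. -/
def IsElementary {F : Type*} [Field F] {n : ℕ} (A : Matrix (Fin n) (Fin n) F) : Prop :=
  (∃ i j : Fin n, i ≠ j ∧ A = Pswap i j) ∨
  (∃ (i : Fin n) (c : F), c ≠ 0 ∧ A = Escale i c) ∨
  (∃ (i j : Fin n) (c : F), i ≠ j ∧ c ≠ 0 ∧ A = Eadd i j c)

namespace CSPL

lemma choose_le_two_pow {m r : ℕ} : m.choose r ≤ 2 ^ m := by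
  rcases le_or_gt r m with h | h
  · calc m.choose r ≤ ∑ i ∈ Finset.range (m + 1), m.choose i :=
        Finset.single_le_sum (fun i _ => Nat.zero_le _) (Finset.mem_range.mpr (by omega))
      _ = 2 ^ m := Nat.sum_range_choose m
  · rw [Nat.choose_eq_zero_of_lt h]; exact Nat.zero_le _

lemma choose_mul_le (a c : ℕ) (ha : 1 ≤ a) :
    ∀ j : ℕ, (a * c + j).choose j ≤ a ^ j * (c + j).choose j := by
  intro j
  induction j with
  | zero => simp
  | succ j IH =>
    have h1 : (a*c + j + 1) * (a*c + j).choose j = (a*c + j + 1).choose (j+1) * (j+1) := by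
      simpa [Nat.succ_eq_add_one] using Nat.add_one_mul_choose_eq (a*c+j) j
    have h2 : (c + j + 1) * (c + j).choose j = (c + j + 1).choose (j+1) * (j+1) := by
      simpa [Nat.succ_eq_add_one] using Nat.add_one_mul_choose_eq (c+j) j
    have key : (a * c + j + 1).choose (j+1) * (j+1) ≤
        (a ^ (j+1) * (c + j + 1).choose (j+1)) * (j+1) := by
      calc (a * c + j + 1).choose (j+1) * (j+1) = (a*c + j + 1) * (a*c + j).choose j := h1.symm
        _ ≤ (a*c + j + 1) * (a ^ j * (c + j).choose j) := Nat.mul_le_mul_left _ IH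
        _ ≤ (a * (c + j + 1)) * (a ^ j * (c + j).choose j) := by
            apply Nat.mul_le_mul_right
            nlinarith
        _ = a ^ (j+1) * ((c + j + 1) * (c + j).choose j) := by ring
        _ = a ^ (j+1) * ((c + j + 1).choose (j+1) * (j+1)) := by rw [h2]
        _ = (a ^ (j+1) * (c + j + 1).choose (j+1)) * (j+1) := by ring
    have hgoal : (a * c + (j+1)).choose (j+1) ≤ a ^ (j+1) * (c + (j+1)).choose (j+1) := by
      rw [show a*c + (j+1) = a*c + j + 1 from by omega, show c + (j+1) = c + j + 1 from by omega]
      exact Nat.le_of_mul_le_mul_right key (Nat.succ_pos j)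
    exact hgoal

lemma geom_helper (u : ℕ) : ∀ b : ℕ,
    (∑ j ∈ Finset.Icc 1 b, (8*u)^j * (16*u)^(b-j)) + (8*u)^b = (16*u)^b := by
  intro b
  induction b with
  | zero => simp
  | succ b IH =>
    have hpeel : (∑ j ∈ Finset.Icc 1 (b+1), (8*u)^j * (16*u)^(b+1-j))
        = (∑ j ∈ Finset.Icc 1 b, (8*u)^j * (16*u)^(b+1-j)) + (8*u)^(b+1) * (16*u)^(b+1-(b+1)) :=
      Finset.sum_Icc_succ_top (by omega) _
    have hfac : ∀ j ∈ Finset.Icc 1 b, (8*u)^j * (16*u)^(b+1-j)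
        = (16*u) * ((8*u)^j * (16*u)^(b-j)) := by
      intro j hj
      rw [Finset.mem_Icc] at hj
      rw [show b+1-j = (b-j)+1 from by omega, pow_succ]
      ring
    rw [hpeel, Finset.sum_congr rfl hfac, ← Finset.mul_sum]
    rw [show b+1-(b+1) = 0 from by omega, pow_zero, mul_one]
    have expand : (16*u)^(b+1) = (16*u) * ((∑ j ∈ Finset.Icc 1 b, (8*u)^j * (16*u)^(b-j)) + (8*u)^b) := by
      rw [IH, pow_succ]; ring
    rw [expand, pow_succ]
    ring

lemma sum_two_pow (b : ℕ) : (∑ i ∈ Finset.range b, 2 ^ i) + 1 = 2 ^ b := by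
  induction b with
  | zero => simp
  | succ b IH => rw [Finset.sum_range_succ, pow_succ]; omega


variable {F : Type*} [Field F] [Fintype F] [DecidableEq F] {n : ℕ}

abbrev Letter (F : Type*) (n : ℕ) := Fin n × Fin n × F
def matL (x : Letter F n) : Matrix (Fin n) (Fin n) F := 1 + single x.1 x.2.1 x.2.2
def Indep (x y : Letter F n) : Prop := x.1 ≠ y.2.1 ∧ y.1 ≠ x.2.1
def Dep (x y : Letter F n) : Prop := x.1 = y.2.1 ∨ y.1 = x.2.1
lemma indep_symm {x y : Letter F n} (h : Indep x y) : Indep y x := ⟨h.2, h.1⟩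
lemma not_dep_iff {x y : Letter F n} : ¬ Dep x y ↔ Indep x y := by unfold Dep Indep; tauto
lemma commute_of_indep {x y : Letter F n} (h : Indep x y) : Commute (matL x) (matL y) := by
  obtain ⟨h1, h2⟩ := h
  unfold Commute SemiconjBy matL
  have e1 : single x.1 x.2.1 x.2.2 * single y.1 y.2.1 y.2.2 = 0 := by
    rw [single_mul_single_of_ne]; exact Ne.symm h2
  have e2 : single y.1 y.2.1 y.2.2 * single x.1 x.2.1 x.2.2 = 0 := by
    rw [single_mul_single_of_ne]; exact Ne.symm h1
  simp only [mul_add, add_mul, e1, e2, one_mul, mul_one]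
  abel

/-- product of a level -/
def lprod (lv : List (Letter F n)) : Matrix (Fin n) (Fin n) F := (lv.map matL).prod

/-- product of a reversed list of levels (head = last level). -/
def PR : List (List (Letter F n)) → Matrix (Fin n) (Fin n) F
  | [] => 1
  | lv :: rest => PR rest * lprod lv

def DepCond (later earlier : List (Letter F n)) : Prop := ∀ ℓ ∈ later, ∃ p ∈ earlier, Dep p ℓ

def okR (R : List (List (Letter F n))) : Prop :=
  (∀ lv ∈ R, lv ≠ [] ∧ lv.Pairwise Indep) ∧ List.IsChain DepCond R

lemma commute_lprod {lv : List (Letter F n)} {x : Letter F n}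
    (h : ∀ p ∈ lv, ¬ Dep p x) : Commute (lprod lv) (matL x) := by
  apply Commute.list_prod_left
  intro y hy
  obtain ⟨p, hp, rfl⟩ := List.mem_map.mp hy
  exact commute_of_indep (not_dep_iff.mp (h p hp))

lemma insert_letter (R : List (List (Letter F n))) (hR : okR R) (x : Letter F n) :
    ∃ R', okR R' ∧ (R'.map List.length).sum = (R.map List.length).sum + 1 ∧
      PR R' = PR R * matL x ∧
      (∀ lv₀ rest₀, R = lv₀ :: rest₀ →
        ((∃ p ∈ lv₀, Dep p x) ∨ ∃ lv₀' rest₀', R' = lv₀' :: rest₀' ∧ ∀ p ∈ lv₀, p ∈ lv₀')) := by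
  induction R with
  | nil =>
    refine ⟨[[x]], ⟨?_, ?_⟩, by simp, by simp [PR, lprod], by simp⟩
    · intro lv hlv; simp at hlv; subst hlv; simp
    · simp
  | cons lv rest IH =>
    by_cases hdep : ∃ p ∈ lv, Dep p x
    · -- new level on top
      refine ⟨[x] :: lv :: rest, ⟨?_, ?_⟩, by simp; omega, by simp [PR, lprod], ?_⟩
      · intro l hl
        rcases List.mem_cons.mp hl with h | h
        · subst h; simp
        · exact hR.1 l h
      · refine List.isChain_cons_cons.mpr ⟨?_, hR.2⟩
        intro ℓ hℓ; simp at hℓ; subst hℓ; exact hdep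
      · intro lv₀ rest₀ h; injection h with h1 h2; subst h1; exact Or.inl hdep
    · push_neg at hdep
      have hcom : Commute (lprod lv) (matL x) := commute_lprod hdep
      have hlv := hR.1 lv (by simp)
      have hpw : (lv ++ [x]).Pairwise Indep := by
        rw [List.pairwise_append]
        refine ⟨hlv.2, by simp, ?_⟩
        intro a ha b hb; simp at hb; subst hb
        exact not_dep_iff.mp (hdep a ha)
      match rest, hR with
      | [], hR =>
        refine ⟨[lv ++ [x]], ⟨?_, by simp⟩, by simp, ?_, ?_⟩
        · intro l hl; simp at hl; subst hl; exact ⟨by simp, hpw⟩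
        · simp only [PR, lprod, List.map_append, List.prod_append, one_mul, List.map_cons,
            List.map_nil, List.prod_cons, List.prod_nil, mul_one]
        · intro lv₀ rest₀ h; injection h with h1 h2; subst h1
          exact Or.inr ⟨lv ++ [x], [], rfl, fun p hp => by simp [hp]⟩
      | lv₁ :: rest₁, hR =>
        by_cases hdep1 : ∃ p ∈ lv₁, Dep p x
        · -- x joins level lv
          refine ⟨(lv ++ [x]) :: lv₁ :: rest₁, ⟨?_, ?_⟩, by simp; omega, ?_, ?_⟩
          · intro l hl
            rcases List.mem_cons.mp hl with h | h
            · subst h; exact ⟨by simp, hpw⟩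
            · exact hR.1 l (List.mem_cons_of_mem _ h)
          · refine List.isChain_cons_cons.mpr ⟨?_, (List.isChain_cons_cons.mp hR.2).2⟩
            intro ℓ hℓ
            rcases List.mem_append.mp hℓ with h | h
            · exact (List.isChain_cons_cons.mp hR.2).1 ℓ h
            · simp at h; subst h; exact hdep1
          · simp only [PR, lprod, List.map_append, List.prod_append, List.map_cons,
              List.map_nil, List.prod_cons, List.prod_nil, mul_one, mul_assoc]
          · intro lv₀ rest₀ h; injection h with h1 h2; subst h1
            exact Or.inr ⟨lv ++ [x], _, rfl, fun p hp => by simp [hp]⟩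
        · -- recurse
          have hrest : okR (lv₁ :: rest₁) := ⟨fun l hl => hR.1 l (by simp [hl]),
            (List.isChain_cons_cons.mp hR.2).2⟩
          obtain ⟨R'', hok'', hsz'', hPR'', hD''⟩ := IH hrest
          rcases hD'' lv₁ rest₁ rfl with h | ⟨lv₁', rest₁', hR''eq, hsub⟩
          · exact absurd h hdep1
          · refine ⟨lv :: R'', ⟨?_, ?_⟩, ?_, ?_, ?_⟩
            · intro l hl
              rcases List.mem_cons.mp hl with h | h
              · subst h; exact hlv
              · exact hok''.1 l h
            · rw [hR''eq] at hok'' ⊢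
              refine List.isChain_cons_cons.mpr ⟨?_, hok''.2⟩
              intro ℓ hℓ
              obtain ⟨p, hp, hd⟩ := (List.isChain_cons_cons.mp hR.2).1 ℓ hℓ
              exact ⟨p, hsub p hp, hd⟩
            · simp only [List.map_cons, List.sum_cons] at hsz'' ⊢
              omega
            · show PR R'' * lprod lv = PR (lv :: lv₁ :: rest₁) * matL x
              rw [hPR'']
              show PR (lv₁ :: rest₁) * matL x * lprod lv = PR (lv₁ :: rest₁) * lprod lv * matL x
              rw [mul_assoc, mul_assoc, hcom.eq]
            · intro lv₀ rest₀ h; injection h with h1 h2; subst h1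
              exact Or.inr ⟨lv, R'', rfl, fun p hp => hp⟩

/-- Layering: every word of letters can be organized into levels. -/
lemma layering (t : List (Letter F n)) :
    ∃ R : List (List (Letter F n)), okR R ∧ (R.map List.length).sum = t.length ∧
      PR R = (t.map matL).prod := by
  induction t using List.reverseRecOn with
  | nil => exact ⟨[], ⟨by simp, by simp⟩, by simp, by simp [PR]⟩
  | append_singleton t x IH =>
    obtain ⟨R, hok, hsz, hPR⟩ := IH
    obtain ⟨R', hok', hsz', hPR', _⟩ := insert_letter R hok x
    exact ⟨R', hok', by simp [hsz', hsz], by simp [hPR', hPR]⟩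


lemma permMatrix_mul_permMatrix (σ τ : Equiv.Perm (Fin n)) :
    (σ.permMatrix F) * (τ.permMatrix F) = Equiv.Perm.permMatrix F (σ.trans τ) := by
  unfold Equiv.Perm.permMatrix
  rw [← PEquiv.toMatrix_trans, ← Equiv.toPEquiv_trans]

lemma permMatrix_refl :
    (Equiv.Perm.permMatrix F (Equiv.refl (Fin n))) = (1 : Matrix (Fin n) (Fin n) F) := by
  unfold Equiv.Perm.permMatrix
  rw [Equiv.toPEquiv_refl, PEquiv.toMatrix_refl]

lemma permMatrix_apply (σ : Equiv.Perm (Fin n)) (i j : Fin n) :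
    (σ.permMatrix F) i j = if σ i = j then 1 else 0 := by
  unfold Equiv.Perm.permMatrix PEquiv.toMatrix
  simp only [of_apply, Equiv.toPEquiv_apply, Option.mem_def, Option.some.injEq]

lemma perm_conj_std (σ τ : Equiv.Perm (Fin n)) (a b : Fin n) (c : F) :
    (σ.permMatrix F) * single a b c * (τ.permMatrix F) =
      single (σ.symm a) (τ b) c := by
  unfold Equiv.Perm.permMatrix
  rw [PEquiv.toMatrix_toPEquiv_mul, PEquiv.mul_toMatrix_toPEquiv]
  ext i j
  simp only [submatrix_apply, single, of_apply, id]
  by_cases h1 : a = σ i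
  · subst h1
    by_cases h2 : b = τ.symm j
    · subst h2; simp
    · have h2' : ¬ (τ b = j) := fun hh => h2 (by simp [← hh])
      simp [h2, h2']
  · have h1' : ¬ (σ.symm a = i) := fun hh => h1 (by simp [← hh])
    simp [h1, h1']

lemma diag_conj_std (d e : Fin n → F) (a b : Fin n) (c : F) :
    diagonal d * single a b c * diagonal e = single a b (d a * c * e b) := by
  ext i j
  rw [mul_diagonal, diagonal_mul]
  simp only [single, of_apply]
  by_cases h1 : a = i <;> by_cases h2 : b = j <;> simp [h1, h2] <;> ring

lemma diag_mul_perm (d : Fin n → F) (σ : Equiv.Perm (Fin n)) :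
    diagonal d * (σ.permMatrix F) = (σ.permMatrix F) * diagonal (fun j => d (σ.symm j)) := by
  ext i j
  rw [diagonal_mul, mul_diagonal, permMatrix_apply]
  by_cases h : σ i = j
  · subst h; simp
  · simp [h]

lemma sandwich (A B X Y : Matrix (Fin n) (Fin n) F) (hBA : B * A = 1) :
    (A * X * B) * (A * Y * B) = A * (X * Y) * B := by
  simp only [mul_assoc]
  rw [← mul_assoc B A, hBA, one_mul]

lemma sandwich' (A B X Y : Matrix (Fin n) (Fin n) F) (hBA : B * A = 1) :
    (A * X * B) * (A * Y) = A * (X * Y) := by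
  simp only [mul_assoc]
  rw [← mul_assoc B A, hBA, one_mul]

lemma conj_list_prod (A B : Matrix (Fin n) (Fin n) F) (hAB : A * B = 1) (hBA : B * A = 1)
    (t : List (Letter F n)) (f : Letter F n → Letter F n)
    (hconj : ∀ x, A * matL x * B = matL (f x)) :
    A * (t.map matL).prod * B = ((t.map f).map matL).prod := by
  induction t with
  | nil => simpa using hAB
  | cons x t IH =>
    simp only [List.map_cons, List.prod_cons]
    rw [← IH, ← hconj x, sandwich A B _ _ hBA]

/-- Phase 1: reduce a product of elementary matrices to
(product of transvection letters) * (permutation * diagonal). -/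
lemma reduce_elementary (l : List (Matrix (Fin n) (Fin n) F)) (hl : ∀ A ∈ l, IsElementary A) :
    ∃ (t : List (Letter F n)) (σ : Equiv.Perm (Fin n)) (d : Fin n → F),
      t.length ≤ l.length ∧
      l.prod = (t.map matL).prod * (σ.permMatrix F * diagonal d) := by
  induction l with
  | nil =>
    refine ⟨[], Equiv.refl _, fun _ => 1, by simp, ?_⟩
    simp [permMatrix_refl]
  | cons A l IH =>
    obtain ⟨t', σ', d', hlen, hprod⟩ := IH (fun B hB => hl B (List.mem_cons_of_mem _ hB))
    rcases hl A (List.mem_cons_self) with ⟨i, j, hij, rfl⟩ | ⟨i, γ, hγ, rfl⟩ |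
      ⟨i, j, c, hij, hc, rfl⟩
    · -- swap case
      set σs := Equiv.swap i j with hσs
      have hPs : (Pswap i j : Matrix (Fin n) (Fin n) F) = Equiv.Perm.permMatrix F σs := rfl
      have hAA : Equiv.Perm.permMatrix F σs * Equiv.Perm.permMatrix F σs
          = (1 : Matrix (Fin n) (Fin n) F) := by
        rw [permMatrix_mul_permMatrix, hσs, Equiv.swap_swap, permMatrix_refl]
      have hconj : ∀ x : Letter F n, Equiv.Perm.permMatrix F σs * matL x *
          Equiv.Perm.permMatrix F σs = matL (σs x.1, σs x.2.1, x.2.2) := by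
        intro x
        unfold matL
        rw [mul_add, mul_one, add_mul, hAA, perm_conj_std]
        have : σs.symm = σs := by rw [hσs]; exact Equiv.symm_swap i j
        rw [this]
      refine ⟨t'.map (fun x => (σs x.1, σs x.2.1, x.2.2)), σs.trans σ', d',
        by simpa using hlen.trans (Nat.le_succ _), ?_⟩
      rw [List.prod_cons, hprod, hPs, ← conj_list_prod _ _ hAA hAA t' _ hconj,
        ← permMatrix_mul_permMatrix,
        mul_assoc (Equiv.Perm.permMatrix F σs) (Equiv.Perm.permMatrix F σ'),
        sandwich' _ _ _ _ hAA]
    · -- scale case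
      set dv := fun t : Fin n => if t = i then γ else (1 : F) with hdv
      set dv' := fun t : Fin n => if t = i then γ⁻¹ else (1 : F) with hdv'
      have hEs : (Escale i γ : Matrix (Fin n) (Fin n) F) = diagonal dv := rfl
      have hAB : diagonal dv * diagonal dv' = (1 : Matrix (Fin n) (Fin n) F) := by
        have h1 : (fun t => dv t * dv' t) = fun _ => (1 : F) := by
          funext t; by_cases h : t = i <;> simp [hdv, hdv', h, mul_inv_cancel₀ hγ]
        rw [diagonal_mul_diagonal, h1, diagonal_one]
      have hBA : diagonal dv' * diagonal dv = (1 : Matrix (Fin n) (Fin n) F) := by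
        have h1 : (fun t => dv' t * dv t) = fun _ => (1 : F) := by
          funext t; by_cases h : t = i <;> simp [hdv, hdv', h, inv_mul_cancel₀ hγ]
        rw [diagonal_mul_diagonal, h1, diagonal_one]
      have hconj : ∀ x : Letter F n, diagonal dv * matL x * diagonal dv'
          = matL (x.1, x.2.1, dv x.1 * x.2.2 * dv' x.2.1) := by
        intro x
        unfold matL
        rw [mul_add, mul_one, add_mul, hAB, diag_conj_std]
      refine ⟨t'.map (fun x => (x.1, x.2.1, dv x.1 * x.2.2 * dv' x.2.1)), σ',
        fun jj => dv (σ'.symm jj) * d' jj, by simpa using hlen.trans (Nat.le_succ _), ?_⟩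
      have hsplit : (diagonal fun jj => dv (σ'.symm jj) * d' jj : Matrix (Fin n) (Fin n) F)
          = diagonal (fun jj => dv (σ'.symm jj)) * diagonal d' := by
        rw [diagonal_mul_diagonal]
      rw [List.prod_cons, hprod, hEs, ← conj_list_prod _ _ hAB hBA t' _ hconj, hsplit,
        ← mul_assoc (Equiv.Perm.permMatrix F σ'), ← diag_mul_perm, mul_assoc,
        mul_assoc (diagonal dv) (Equiv.Perm.permMatrix F σ') (diagonal d'),
        ← mul_assoc _ (diagonal dv'), sandwich' _ _ _ _ hBA]
    · -- transvection case
      refine ⟨(j, i, c) :: t', σ', d', by simpa using Nat.succ_le_succ hlen, ?_⟩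
      rw [List.prod_cons, hprod, List.map_cons, List.prod_cons, ← mul_assoc]
      rfl


abbrev Item (F : Type*) (n : ℕ) := Bool × Fin n × Fin n × F

def decodeItem (it : Item F n) : Letter F n :=
  if it.1 then (it.2.2.1, it.2.1, it.2.2.2) else (it.2.1, it.2.2.1, it.2.2.2)

def okayI (prev : Multiset (Item F n)) (it : Item F n) : Prop :=
  ∃ p ∈ prev.toFinset, (if it.1 then (decodeItem p).1 = it.2.1 else (decodeItem p).2.1 = it.2.1)

instance (prev : Multiset (Item F n)) : DecidablePred (okayI prev) := by
  intro it; unfold okayI; infer_instance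

/-- chain validity of a code. -/
def vc : Multiset (Item F n) → List (Multiset (Item F n)) → Prop
  | _, [] => True
  | prev, lv :: rest => lv ≠ 0 ∧ (∀ it ∈ lv, okayI prev it) ∧ vc lv rest

def okFinset (prev : Multiset (Item F n)) : Finset (Item F n) :=
  Finset.univ.filter (okayI prev)

lemma okFinset_card (prev : Multiset (Item F n)) :
    (okFinset prev).card ≤ (2 * Multiset.card prev) * (n * Fintype.card F) := by
  classical
  set T : Finset (Bool × Fin n) :=
    prev.toFinset.image (fun p => (true, (decodeItem p).1)) ∪
    prev.toFinset.image (fun p => (false, (decodeItem p).2.1)) with hT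
  have hinj : Set.InjOn (fun it : Item F n => ((it.1, it.2.1), (it.2.2.1, it.2.2.2)))
      ↑(okFinset prev) := by
    intro x _ y _ h
    simp only [Prod.mk.injEq] at h
    obtain ⟨⟨h1, h2⟩, h3, h4⟩ := h
    exact Prod.ext h1 (Prod.ext h2 (Prod.ext h3 h4))
  have hmaps : ∀ it ∈ okFinset prev,
      ((it.1, it.2.1), (it.2.2.1, it.2.2.2)) ∈ T ×ˢ (Finset.univ : Finset (Fin n × F)) := by
    intro it hit
    rw [Finset.mem_product]
    refine ⟨?_, Finset.mem_univ _⟩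
    have hok : okayI prev it := (Finset.mem_filter.mp hit).2
    obtain ⟨p, hp, hcond⟩ := hok
    rw [hT, Finset.mem_union]
    cases hb : it.1
    · right
      rw [Finset.mem_image]
      refine ⟨p, hp, ?_⟩
      rw [hb] at hcond
      simp only [Bool.false_eq_true, if_false] at hcond
      simp [hcond, hb]
    · left
      rw [Finset.mem_image]
      refine ⟨p, hp, ?_⟩
      rw [hb] at hcond
      simp only [if_true] at hcond
      simp [hcond, hb]
  calc (okFinset prev).card ≤ (T ×ˢ (Finset.univ : Finset (Fin n × F))).card :=
      Finset.card_le_card_of_injOn _ hmaps hinj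
    _ = T.card * (n * Fintype.card F) := by
        rw [Finset.card_product]
        congr 1
        simp [Fintype.card_prod]
    _ ≤ (2 * Multiset.card prev) * (n * Fintype.card F) := by
        apply Nat.mul_le_mul_right
        calc T.card ≤ _ + _ := Finset.card_union_le _ _
          _ ≤ 2 * Multiset.card prev := by
            have h1 := Finset.card_image_le (s := prev.toFinset)
              (f := fun p => (true, (decodeItem p).1))
            have h2 := Finset.card_image_le (s := prev.toFinset)
              (f := fun p => (false, (decodeItem p).2.1))
            have h3 := Multiset.toFinset_card_le prev
            omega

def CodesSet (prev : Multiset (Item F n)) (b : ℕ) : Set (List (Multiset (Item F n))) :=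
  {L | vc prev L ∧ (L.map Multiset.card).sum ≤ b}

lemma codes_finset (hn : 0 < n) :
    ∀ b : ℕ, ∀ prev : Multiset (Item F n),
    ∃ FS : Finset (List (Multiset (Item F n))), CodesSet prev b ⊆ ↑FS ∧
      FS.card ≤ 2 ^ (Multiset.card prev) * (16 * (n * Fintype.card F)) ^ b := by
  classical
  intro b
  induction b using Nat.strong_induction_on with
  | _ b IH =>
  intro prev
  set u := n * Fintype.card F with hu
  have hu1 : 1 ≤ u := by
    rw [hu]
    have : 0 < Fintype.card F := Fintype.card_pos
    exact Nat.one_le_iff_ne_zero.mpr (by positivity)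
  rcases Nat.eq_zero_or_pos b with rfl | hb
  · refine ⟨{[]}, ?_, by simpa using Nat.one_le_two_pow⟩
    intro L hL
    obtain ⟨hvc, hsum⟩ := hL
    cases L with
    | nil => simp
    | cons lv rest =>
      exfalso
      obtain ⟨hne, _, _⟩ := hvc
      simp only [List.map_cons, List.sum_cons, Nat.le_zero] at hsum
      exact hne (Multiset.card_eq_zero.mp (by omega))
  · -- b ≥ 1
    have H : ∀ lv : Multiset (Item F n), ∃ FS' : Finset (List (Multiset (Item F n))),
        (1 ≤ Multiset.card lv → CodesSet lv (b - Multiset.card lv) ⊆ ↑FS' ∧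
          FS'.card ≤ 2 ^ (Multiset.card lv) * (16 * u) ^ (b - Multiset.card lv)) := by
      intro lv
      by_cases h : 1 ≤ Multiset.card lv
      · obtain ⟨FS', h1, h2⟩ := IH (b - Multiset.card lv) (by omega) lv
        exact ⟨FS', fun _ => ⟨h1, h2⟩⟩
      · exact ⟨∅, fun hh => absurd hh h⟩
    choose g hg using H
    set SymImg : ℕ → Finset (Multiset (Item F n)) := fun j =>
      (Finset.univ : Finset (Sym {x : Item F n // x ∈ okFinset prev} j)).image
        (fun s => Multiset.map Subtype.val s.1) with hSymImg
    refine ⟨insert [] ((Finset.Icc 1 b).biUnion (fun j =>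
      (SymImg j).biUnion (fun lv => (g lv).image (List.cons lv)))), ?_, ?_⟩
    · -- subset
      rintro L ⟨hvc, hsum⟩
      cases L with
      | nil => simp
      | cons lv rest =>
        obtain ⟨hne, hok, hvcr⟩ := hvc
        simp only [List.map_cons, List.sum_cons] at hsum
        have hc1 : 1 ≤ Multiset.card lv := by
          rcases Nat.eq_zero_or_pos (Multiset.card lv) with h | h
          · exact absurd (Multiset.card_eq_zero.mp h) hne
          · exact h
        have hcb : Multiset.card lv ≤ b := by omega
        apply Finset.mem_insert_of_mem
        rw [Finset.mem_biUnion]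
        refine ⟨Multiset.card lv, Finset.mem_Icc.mpr ⟨hc1, hcb⟩, ?_⟩
        rw [Finset.mem_biUnion]
        have hmem : ∀ x ∈ lv, x ∈ okFinset prev := by
          intro x hx
          exact Finset.mem_filter.mpr ⟨Finset.mem_univ _, hok x hx⟩
        refine ⟨lv, ?_, ?_⟩
        · rw [hSymImg]
          simp only [Finset.mem_image]
          refine ⟨⟨lv.pmap (fun x hx => (⟨x, hx⟩ : {x : Item F n // x ∈ okFinset prev})) hmem,
            by rw [Multiset.card_pmap]⟩, Finset.mem_univ _, ?_⟩
          simp only [Multiset.map_pmap]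
          rw [Multiset.pmap_eq_map]
          simp
        · rw [Finset.mem_image]
          refine ⟨rest, ?_, rfl⟩
          have := (hg lv hc1).1
          apply this
          exact ⟨hvcr, by omega⟩
    · -- cardinality
      calc (insert [] ((Finset.Icc 1 b).biUnion (fun j =>
            (SymImg j).biUnion (fun lv => (g lv).image (List.cons lv))))).card
          ≤ ((Finset.Icc 1 b).biUnion (fun j =>
            (SymImg j).biUnion (fun lv => (g lv).image (List.cons lv)))).card + 1 :=
            Finset.card_insert_le _ _
        _ ≤ (∑ j ∈ Finset.Icc 1 b, ((SymImg j).biUnion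
              (fun lv => (g lv).image (List.cons lv))).card) + 1 := by
            have := Finset.card_biUnion_le (s := Finset.Icc 1 b)
              (t := fun j => (SymImg j).biUnion (fun lv => (g lv).image (List.cons lv)))
            omega
        _ ≤ (∑ j ∈ Finset.Icc 1 b, ∑ lv ∈ SymImg j, ((g lv).image (List.cons lv)).card) + 1 := by
            have : ∀ j ∈ Finset.Icc 1 b, ((SymImg j).biUnion
                (fun lv => (g lv).image (List.cons lv))).card ≤
                ∑ lv ∈ SymImg j, ((g lv).image (List.cons lv)).card :=
              fun j _ => Finset.card_biUnion_le
            have := Finset.sum_le_sum this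
            omega
        _ ≤ (∑ j ∈ Finset.Icc 1 b, ∑ lv ∈ SymImg j, 2 ^ j * (16 * u) ^ (b - j)) + 1 := by
            have : ∀ j ∈ Finset.Icc 1 b, ∑ lv ∈ SymImg j, ((g lv).image (List.cons lv)).card ≤
                ∑ lv ∈ SymImg j, 2 ^ j * (16 * u) ^ (b - j) := by
              intro j hj
              rw [Finset.mem_Icc] at hj
              apply Finset.sum_le_sum
              intro lv hlv
              have hcard : Multiset.card lv = j := by
                rw [hSymImg] at hlv
                simp only [Finset.mem_image] at hlv
                obtain ⟨s, _, rfl⟩ := hlv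
                rw [Multiset.card_map]
                exact s.2
              calc ((g lv).image (List.cons lv)).card ≤ (g lv).card := Finset.card_image_le
                _ ≤ 2 ^ (Multiset.card lv) * (16 * u) ^ (b - Multiset.card lv) :=
                    (hg lv (by omega)).2
                _ = 2 ^ j * (16 * u) ^ (b - j) := by rw [hcard]
            have := Finset.sum_le_sum this
            omega
        _ ≤ (∑ j ∈ Finset.Icc 1 b, ((2 * Multiset.card prev) * u + j).choose j *
              (2 ^ j * (16 * u) ^ (b - j))) + 1 := by
            have : ∀ j ∈ Finset.Icc 1 b, ∑ lv ∈ SymImg j, 2 ^ j * (16 * u) ^ (b - j) ≤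
                ((2 * Multiset.card prev) * u + j).choose j * (2 ^ j * (16 * u) ^ (b - j)) := by
              intro j hj
              rw [Finset.sum_const, smul_eq_mul]
              apply Nat.mul_le_mul_right
              calc (SymImg j).card ≤ (Finset.univ :
                    Finset (Sym {x : Item F n // x ∈ okFinset prev} j)).card :=
                  Finset.card_image_le
                _ = Fintype.card (Sym {x : Item F n // x ∈ okFinset prev} j) := rfl
                _ = ((okFinset prev).card + j - 1).choose j := by
                    rw [Sym.card_sym_eq_choose, Fintype.card_coe]
                _ ≤ ((2 * Multiset.card prev) * u + j).choose j := by
                    apply Nat.choose_le_choose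
                    have h := okFinset_card (n := n) prev
                    rw [← hu] at h
                    omega
            have := Finset.sum_le_sum this
            omega
        _ ≤ (∑ j ∈ Finset.Icc 1 b, 2 ^ (Multiset.card prev) * ((8 * u) ^ j *
              (16 * u) ^ (b - j))) + 1 := by
            have : ∀ j ∈ Finset.Icc 1 b, ((2 * Multiset.card prev) * u + j).choose j *
                (2 ^ j * (16 * u) ^ (b - j)) ≤
                2 ^ (Multiset.card prev) * ((8 * u) ^ j * (16 * u) ^ (b - j)) := by
              intro j hj
              have step1 : ((2 * Multiset.card prev) * u + j).choose j ≤
                  (2 * u) ^ j * (Multiset.card prev + j).choose j := by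
                have := choose_mul_le (2 * u) (Multiset.card prev) (by omega) j
                calc ((2 * Multiset.card prev) * u + j).choose j
                    = ((2 * u) * Multiset.card prev + j).choose j := by ring_nf
                  _ ≤ (2 * u) ^ j * (Multiset.card prev + j).choose j := this
              have step2 : (Multiset.card prev + j).choose j ≤ 2 ^ (Multiset.card prev + j) :=
                choose_le_two_pow
              calc ((2 * Multiset.card prev) * u + j).choose j * (2 ^ j * (16 * u) ^ (b - j))
                  ≤ ((2 * u) ^ j * 2 ^ (Multiset.card prev + j)) * (2 ^ j * (16 * u) ^ (b - j)) := by
                    apply Nat.mul_le_mul_right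
                    exact le_trans step1 (Nat.mul_le_mul_left _ step2)
                _ = 2 ^ (Multiset.card prev) * ((8 * u) ^ j * (16 * u) ^ (b - j)) := by
                    rw [show (8:ℕ)*u = 2*(2*(2*u)) from by ring]
                    simp only [mul_pow, pow_add]
                    ring
            have := Finset.sum_le_sum this
            omega
        _ ≤ 2 ^ (Multiset.card prev) * (16 * u) ^ b := by
            have hgeom := geom_helper u b
            have hms : (∑ j ∈ Finset.Icc 1 b, 2 ^ (Multiset.card prev) *
                ((8 * u) ^ j * (16 * u) ^ (b - j)))
                = 2 ^ (Multiset.card prev) * (∑ j ∈ Finset.Icc 1 b, (8*u)^j * (16*u)^(b-j)) := by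
              rw [Finset.mul_sum]
            have hpos : 0 < 2 ^ (Multiset.card prev) * (8*u)^b := by positivity
            calc (∑ j ∈ Finset.Icc 1 b, 2 ^ (Multiset.card prev) *
                  ((8 * u) ^ j * (16 * u) ^ (b - j))) + 1
                ≤ 2 ^ (Multiset.card prev) * (∑ j ∈ Finset.Icc 1 b, (8*u)^j * (16*u)^(b-j))
                  + 2 ^ (Multiset.card prev) * (8*u)^b := by omega
              _ = 2 ^ (Multiset.card prev) * (16 * u) ^ b := by rw [← Nat.mul_add, hgeom]


noncomputable def levelMat (lv : Multiset (Item F n)) : Matrix (Fin n) (Fin n) F :=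
  (lv.toList.map (fun it => matL (decodeItem it))).prod

noncomputable def decodeCode (L : List (Multiset (Item F n))) : Matrix (Fin n) (Fin n) F :=
  (L.map levelMat).prod

def itemize (plv : List (Letter F n)) (ℓ : Letter F n) : Item F n :=
  if ∃ p ∈ plv, p.1 = ℓ.2.1 then (true, ℓ.2.1, ℓ.1, ℓ.2.2) else (false, ℓ.1, ℓ.2.1, ℓ.2.2)

lemma itemize_decode (plv : List (Letter F n)) (ℓ : Letter F n) :
    decodeItem (itemize plv ℓ) = ℓ := by
  unfold itemize
  split_ifs with h
  · show decodeItem (true, ℓ.2.1, ℓ.1, ℓ.2.2) = ℓ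
    simp [decodeItem]
  · show decodeItem (false, ℓ.1, ℓ.2.1, ℓ.2.2) = ℓ
    simp [decodeItem]

lemma levelMat_coe (lv : List (Letter F n)) (plv : List (Letter F n))
    (hpw : lv.Pairwise Indep) :
    levelMat (↑(lv.map (itemize plv)) : Multiset (Item F n)) = lprod lv := by
  unfold levelMat lprod
  have hperm : ((↑(lv.map (itemize plv)) : Multiset (Item F n)).toList).Perm
      (lv.map (itemize plv)) := by
    rw [← Multiset.coe_eq_coe, Multiset.coe_toList]
  have hmapeq : (lv.map (itemize plv)).map (fun it => matL (decodeItem it)) = lv.map matL := by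
    rw [List.map_map]
    apply List.map_congr_left
    intro ℓ _
    simp [Function.comp, itemize_decode]
  have hperm2 : (((↑(lv.map (itemize plv)) : Multiset (Item F n)).toList).map
      (fun it => matL (decodeItem it))).Perm (lv.map matL) := by
    rw [← hmapeq]
    exact hperm.map _
  apply hperm2.prod_eq'
  have hpwC : (lv.map matL).Pairwise Commute :=
    List.Pairwise.map _ (fun a b h => commute_of_indep h) hpw
  have hsymm : Symmetric fun A B : Matrix (Fin n) (Fin n) F => Commute A B :=
    fun _ _ h => h.symm
  exact (List.Perm.pairwise_iff @hsymm hperm2).mpr hpwC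

/-- Phase 2.5 : from a layered list of letter-levels to a valid code. -/
lemma code_exists :
    ∀ (Lf : List (List (Letter F n))) (plv : List (Letter F n)) (prevI : Multiset (Item F n)),
    (prevI.map decodeItem = ↑plv) →
    (∀ lv ∈ Lf, lv ≠ [] ∧ lv.Pairwise Indep) →
    (List.IsChain (fun earlier later => ∀ ℓ ∈ later, ∃ p ∈ earlier, Dep p ℓ) (plv :: Lf)) →
    ∃ C : List (Multiset (Item F n)), vc prevI C ∧
      (C.map Multiset.card).sum = (Lf.map List.length).sum ∧
      (C.map levelMat).prod = (Lf.map lprod).prod := by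
  intro Lf
  induction Lf with
  | nil => intro plv prevI _ _ _; exact ⟨[], trivial, by simp, by simp⟩
  | cons lv rest IH =>
    intro plv prevI hdec hpw hch
    have hchc := List.isChain_cons_cons.mp hch
    have hlv := hpw lv (List.mem_cons_self)
    set itsl := lv.map (itemize plv) with hitsl
    have hdec' : (↑itsl : Multiset (Item F n)).map decodeItem = ↑lv := by
      rw [hitsl, Multiset.map_coe, List.map_map]
      congr 1
      rw [show decodeItem ∘ itemize plv = id from funext (fun ℓ => itemize_decode plv ℓ),
        List.map_id]
    obtain ⟨C', hvc', hsz', hprod'⟩ := IH lv (↑itsl) hdec'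
      (fun l hl => hpw l (List.mem_cons_of_mem _ hl)) hchc.2
    refine ⟨(↑itsl : Multiset (Item F n)) :: C', ⟨?_, ?_, hvc'⟩, ?_, ?_⟩
    · -- nonzero
      simp only [hitsl, ne_eq, Multiset.coe_eq_zero, List.map_eq_nil_iff]
      exact (hlv).1
    · -- okay
      intro it hit
      rw [Multiset.mem_coe, hitsl, List.mem_map] at hit
      obtain ⟨ℓ, hℓ, rfl⟩ := hit
      obtain ⟨p, hp, hdep⟩ := hchc.1 ℓ hℓ
      unfold okayI itemize
      by_cases hbr : ∃ p ∈ plv, p.1 = ℓ.2.1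
      · rw [if_pos hbr]
        obtain ⟨p', hp', he⟩ := hbr
        have hmem : p' ∈ (prevI.map decodeItem) := by rw [hdec]; exact Multiset.mem_coe.mpr hp'
        obtain ⟨pI, hpI, hdecp⟩ := Multiset.mem_map.mp hmem
        exact ⟨pI, Multiset.mem_toFinset.mpr hpI, by simp [hdecp, he]⟩
      · rw [if_neg hbr]
        have hdep2 : ℓ.1 = p.2.1 := by
          rcases hdep with h | h
          · exact absurd ⟨p, hp, h⟩ hbr
          · exact h
        have hmem : p ∈ (prevI.map decodeItem) := by rw [hdec]; exact Multiset.mem_coe.mpr hp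
        obtain ⟨pI, hpI, hdecp⟩ := Multiset.mem_map.mp hmem
        exact ⟨pI, Multiset.mem_toFinset.mpr hpI, by simp [hdecp, ← hdep2]⟩
    · simp only [List.map_cons, List.sum_cons, hsz']
      rw [hitsl]
      simp
    · simp only [List.map_cons, List.prod_cons, hprod']
      rw [levelMat_coe lv plv hlv.2]

def plv0 : List (Letter F n) := (List.finRange n).map (fun i => (i, i, (0 : F)))

def prevZero : Multiset (Item F n) :=
  ↑((List.finRange n).map (fun i => ((false, i, i, (0 : F)) : Item F n)))

lemma prevZero_card : Multiset.card (prevZero : Multiset (Item F n)) = n := by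
  simp [prevZero]

lemma prevZero_decode : (prevZero : Multiset (Item F n)).map decodeItem = ↑(plv0 : List (Letter F n)) := by
  unfold prevZero plv0
  rw [Multiset.map_coe, List.map_map]
  rfl

lemma plv0_dep (ℓ : Letter F n) : ∃ p ∈ (plv0 : List (Letter F n)), Dep p ℓ := by
  refine ⟨(ℓ.2.1, ℓ.2.1, 0), ?_, Or.inl rfl⟩
  unfold plv0
  rw [List.mem_map]
  exact ⟨ℓ.2.1, List.mem_finRange _, rfl⟩

lemma PR_eq_forward (R : List (List (Letter F n))) :
    PR R = ((R.reverse).map lprod).prod := by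
  induction R with
  | nil => simp [PR]
  | cons lv rest IH => simp [PR, IH]

/-- All products of at most k transvection letters lie in a small finset. -/
lemma trans_prod_finset (hn : 0 < n) (k : ℕ) :
    ∃ FS : Finset (Matrix (Fin n) (Fin n) F),
      (∀ t : List (Letter F n), t.length ≤ k → (t.map matL).prod ∈ FS) ∧
      FS.card ≤ 2 ^ n * (16 * (n * Fintype.card F)) ^ k := by
  classical
  obtain ⟨FS0, hsub, hcard⟩ := codes_finset (F := F) hn k prevZero
  refine ⟨FS0.image decodeCode, ?_, ?_⟩
  · intro t ht
    obtain ⟨R, hok, hsz, hPR⟩ := layering t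
    set Lf := R.reverse with hLf
    have hlevels : ∀ lv ∈ Lf, lv ≠ [] ∧ lv.Pairwise Indep := by
      intro lv hlv
      exact hok.1 lv (List.mem_reverse.mp hlv)
    have hchainR : List.IsChain (fun earlier later => ∀ ℓ ∈ later, ∃ p ∈ earlier, Dep p ℓ) Lf := by
      rw [hLf, List.isChain_reverse]
      exact hok.2
    have hchain : List.IsChain (fun earlier later => ∀ ℓ ∈ later, ∃ p ∈ earlier, Dep p ℓ)
        ((plv0 : List (Letter F n)) :: Lf) := by
      apply List.isChain_cons.mpr
      exact ⟨fun b _ ℓ _ => plv0_dep ℓ, hchainR⟩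
    obtain ⟨C, hvc, hsz2, hprod⟩ := code_exists Lf plv0 prevZero prevZero_decode hlevels hchain
    have hC : C ∈ CodesSet prevZero k := by
      refine ⟨hvc, ?_⟩
      rw [hsz2]
      have : (Lf.map List.length).sum = (R.map List.length).sum := by
        show ((R.reverse).map List.length).sum = _
        rw [List.map_reverse, List.sum_reverse]
      omega
    rw [Finset.mem_image]
    refine ⟨C, hsub hC, ?_⟩
    unfold decodeCode
    rw [hprod, ← PR_eq_forward, hPR]
  · calc (FS0.image decodeCode).card ≤ FS0.card := Finset.card_image_le
      _ ≤ 2 ^ (Multiset.card (prevZero : Multiset (Item F n)))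
          * (16 * (n * Fintype.card F)) ^ k := hcard
      _ = 2 ^ n * (16 * (n * Fintype.card F)) ^ k := by rw [prevZero_card]

/-- Main natural-number counting bound. -/
lemma main_count (hn : 0 < n) (k : ℕ) :
    (Set.ncard {M : Matrix (Fin n) (Fin n) F |
        ∃ l : List (Matrix (Fin n) (Fin n) F),
          l.length ≤ k ∧ (∀ A ∈ l, IsElementary A) ∧ M = l.prod})
      ≤ (Nat.factorial n * Fintype.card F ^ n) * (2 ^ n * (16 * (n * Fintype.card F)) ^ k) := by
  classical
  obtain ⟨FS, hFS, hcard⟩ := trans_prod_finset (F := F) hn k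
  set big : Finset (Matrix (Fin n) (Fin n) F) :=
    (FS ×ˢ (Finset.univ : Finset (Equiv.Perm (Fin n) × (Fin n → F)))).image
      (fun Md => Md.1 * (Md.2.1.permMatrix F * diagonal Md.2.2)) with hbig
  have hsub : {M : Matrix (Fin n) (Fin n) F |
      ∃ l : List (Matrix (Fin n) (Fin n) F),
        l.length ≤ k ∧ (∀ A ∈ l, IsElementary A) ∧ M = l.prod} ⊆ ↑big := by
    rintro M ⟨l, hlen, hel, rfl⟩
    obtain ⟨t, σ, d, htlen, hprod⟩ := reduce_elementary l hel
    rw [hbig]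
    simp only [Finset.coe_image, Set.mem_image, Finset.mem_coe, Finset.mem_product]
    exact ⟨((t.map matL).prod, (σ, d)), ⟨hFS t (htlen.trans hlen), Finset.mem_univ _⟩,
      hprod.symm⟩
  calc Set.ncard {M : Matrix (Fin n) (Fin n) F |
        ∃ l : List (Matrix (Fin n) (Fin n) F),
          l.length ≤ k ∧ (∀ A ∈ l, IsElementary A) ∧ M = l.prod}
      ≤ Set.ncard (↑big : Set (Matrix (Fin n) (Fin n) F)) :=
        Set.ncard_le_ncard hsub (big.finite_toSet)
    _ = big.card := Set.ncard_coe_finset _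
    _ ≤ (FS ×ˢ (Finset.univ : Finset (Equiv.Perm (Fin n) × (Fin n → F)))).card :=
        Finset.card_image_le
    _ = FS.card * (Nat.factorial n * Fintype.card F ^ n) := by
        rw [Finset.card_product, Finset.card_univ, Fintype.card_prod, Fintype.card_perm,
          Fintype.card_fun]
        simp [Fintype.card_fin]
    _ ≤ (2 ^ n * (16 * (n * Fintype.card F)) ^ k) * (Nat.factorial n * Fintype.card F ^ n) := by
        exact Nat.mul_le_mul_right _ hcard
    _ = (Nat.factorial n * Fintype.card F ^ n) * (2 ^ n * (16 * (n * Fintype.card F)) ^ k) := by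
        ring

end CSPL

/-- The number of matrices expressible as a product of at most `k` elementary matrices
is at most `q^{(k+2n)·log_q n + (3k+n)·log_q 2 + n + k + k·log_q e}`. -/
theorem card_short_products_le (n k q : ℕ) (hn : 0 < n) (hk : 0 < k) (hq : IsPrimePow q)
    (F : Type*) [Field F] [Fintype F] [DecidableEq F] (hF : Fintype.card F = q) :
    (Set.ncard {M : Matrix (Fin n) (Fin n) F |
        ∃ l : List (Matrix (Fin n) (Fin n) F),
          l.length ≤ k ∧ (∀ A ∈ l, IsElementary A) ∧ M = l.prod} : ℝ)
      ≤ (q : ℝ) ^ (((k : ℝ) + 2 * n) * Real.logb q n + (3 * (k : ℝ) + n) * Real.logb q 2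
          + n + k + (k : ℝ) * Real.logb q (Real.exp 1)) := by
  subst hF
  have hc2 : 2 ≤ Fintype.card F := hq.two_le
  set c : ℝ := (Fintype.card F : ℝ) with hcdef
  have hc0 : (0 : ℝ) < c := by
    rw [hcdef]; exact_mod_cast Nat.lt_of_lt_of_le (by norm_num) hc2
  have hc1 : c ≠ 1 := by
    rw [hcdef]
    have : (2:ℝ) ≤ (Fintype.card F : ℝ) := by exact_mod_cast hc2
    linarith
  have hn0 : (0 : ℝ) < (n : ℝ) := by exact_mod_cast hn
  have he2 : (2 : ℝ) ≤ Real.exp 1 := by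
    have := Real.add_one_le_exp 1
    linarith
  -- decompose RHS
  have hrhs : c ^ (((k : ℝ) + 2 * n) * Real.logb c n + (3 * (k : ℝ) + n) * Real.logb c 2
        + n + k + (k : ℝ) * Real.logb c (Real.exp 1))
      = ((n:ℝ) ^ (k + 2*n) * 2 ^ (3*k + n)) * (c ^ n * c ^ k * (Real.exp 1) ^ k) := by
    rw [Real.rpow_add hc0, Real.rpow_add hc0, Real.rpow_add hc0, Real.rpow_add hc0]
    have e1 : c ^ (((k : ℝ) + 2 * n) * Real.logb c n) = (n:ℝ) ^ (k + 2*n) := by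
      rw [mul_comm, Real.rpow_mul (le_of_lt hc0), Real.rpow_logb hc0 hc1 hn0]
      rw [show ((k : ℝ) + 2 * n) = ((k + 2*n : ℕ) : ℝ) by push_cast; ring, Real.rpow_natCast]
    have e2 : c ^ ((3 * (k : ℝ) + n) * Real.logb c 2) = (2:ℝ) ^ (3*k + n) := by
      rw [mul_comm, Real.rpow_mul (le_of_lt hc0), Real.rpow_logb hc0 hc1 (by norm_num)]
      rw [show (3 * (k : ℝ) + n) = ((3*k + n : ℕ) : ℝ) by push_cast; ring, Real.rpow_natCast]
    have e3 : c ^ ((k : ℝ) * Real.logb c (Real.exp 1)) = (Real.exp 1) ^ k := by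
      rw [mul_comm, Real.rpow_mul (le_of_lt hc0), Real.rpow_logb hc0 hc1 (Real.exp_pos 1),
        Real.rpow_natCast]
    rw [e1, e2, e3, Real.rpow_natCast, Real.rpow_natCast]
    ring
  rw [hrhs]
  -- natural number bound
  have hnat := CSPL.main_count (F := F) hn k
  have hcast : (Set.ncard {M : Matrix (Fin n) (Fin n) F |
      ∃ l : List (Matrix (Fin n) (Fin n) F),
        l.length ≤ k ∧ (∀ A ∈ l, IsElementary A) ∧ M = l.prod} : ℝ)
      ≤ ((Nat.factorial n * Fintype.card F ^ n) *
          (2 ^ n * (16 * (n * Fintype.card F)) ^ k) : ℕ) := by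
    exact_mod_cast hnat
  refine hcast.trans ?_
  have hexp : (((Nat.factorial n * Fintype.card F ^ n) *
      (2 ^ n * (16 * (n * Fintype.card F)) ^ k) : ℕ) : ℝ)
      = ((Nat.factorial n : ℝ) * 2 ^ n * c ^ n) * ((16:ℝ) ^ k * (n:ℝ) ^ k * c ^ k) := by
    push_cast
    ring
  rw [hexp]
  have hfac : (Nat.factorial n : ℝ) ≤ (n:ℝ) ^ n := by exact_mod_cast Nat.factorial_le_pow n
  have hnn : (n:ℝ) ^ n ≤ (n:ℝ) ^ (2*n) := by
    apply pow_le_pow_right₀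
    · exact_mod_cast hn
    · omega
  have h16 : (16:ℝ) ^ k ≤ (8:ℝ) ^ k * (Real.exp 1) ^ k := by
    rw [← mul_pow]
    apply pow_le_pow_left₀ (by norm_num)
    linarith
  calc ((Nat.factorial n : ℝ) * 2 ^ n * c ^ n) * ((16:ℝ) ^ k * (n:ℝ) ^ k * c ^ k)
      ≤ ((n:ℝ) ^ (2*n) * 2 ^ n * c ^ n) * (((8:ℝ) ^ k * (Real.exp 1) ^ k) * (n:ℝ) ^ k * c ^ k) := by
        apply mul_le_mul
        · apply mul_le_mul_of_nonneg_right _ (by positivity)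
          apply mul_le_mul_of_nonneg_right (hfac.trans hnn) (by positivity)
        · apply mul_le_mul_of_nonneg_right _ (by positivity)
          apply mul_le_mul_of_nonneg_right h16 (by positivity)
        · positivity
        · positivity
    _ = ((n:ℝ) ^ (k + 2*n) * 2 ^ (3*k + n)) * (c ^ n * c ^ k * (Real.exp 1) ^ k) := by
        rw [pow_add, pow_add (2:ℝ) (3*k) n,
          show ((2:ℝ)^(3*k)) = 8^k from by rw [pow_mul]; norm_num]
        ring
end

section
/- Every product of elementary n×n matrices over a field F equals a product E_1⋯E_k (with k at most the original length) where first come transposition matrices, then row-scaling matrices E_i(λ) with strictly increasing indices i, and then transvections E_{ij}(λ). -/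
open Matrix

section Aux
variable {F : Type*} [Field F] {n : ℕ}

lemma mul_Pswap (i j : Fin n) (M : Matrix (Fin n) (Fin n) F) :
    M * Pswap i j = Pswap i j * M.submatrix (Equiv.swap i j) (Equiv.swap i j) := by
  rw [Pswap, Equiv.Perm.permMatrix, PEquiv.mul_toMatrix_toPEquiv, PEquiv.toMatrix_toPEquiv_mul]
  ext a b
  simp [submatrix_apply]

lemma Escale_submatrix (i j k : Fin n) (c : F) :
    (Escale k c).submatrix (Equiv.swap i j) (Equiv.swap i j)
      = Escale (Equiv.swap i j k) c := by
  ext a b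
  have hk : Equiv.swap i j a = k ↔ a = Equiv.swap i j k := by
    constructor <;> intro h <;> subst h <;> simp
  rcases eq_or_ne a b with rfl | hab
  · simp [Escale, submatrix_apply, diagonal_apply, hk]
  · simp [Escale, submatrix_apply, diagonal_apply_ne, hab,
      (Equiv.injective _).ne hab]

lemma Eadd_submatrix (i j a b : Fin n) (c : F) :
    (Eadd a b c).submatrix (Equiv.swap i j) (Equiv.swap i j)
      = Eadd (Equiv.swap i j a) (Equiv.swap i j b) c := by
  ext x y
  have h1 : b = Equiv.swap i j x ↔ Equiv.swap i j b = x := by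
    constructor <;> intro h <;> subst h <;> simp
  have h2 : a = Equiv.swap i j y ↔ Equiv.swap i j a = y := by
    constructor <;> intro h <;> subst h <;> simp
  simp only [Eadd, submatrix_apply, Matrix.add_apply, one_apply, Matrix.single, of_apply,
    Equiv.apply_eq_iff_eq]
  rw [if_congr (and_congr h1 h2) rfl rfl]

lemma Escale_mul_Escale (i : Fin n) (a b : F) :
    Escale i a * Escale i b = Escale (F := F) i (a * b) := by
  ext x y
  rcases eq_or_ne x y with rfl | hxy
  · by_cases h : x = i <;> simp [Escale, diagonal_mul_diagonal, h]
  · simp [Escale, diagonal_mul_diagonal, diagonal_apply_ne _ hxy]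

lemma Escale_comm (i j : Fin n) (a b : F) :
    Escale i a * Escale j b = Escale j b * Escale i a := by
  ext x y
  rcases eq_or_ne x y with rfl | hxy
  · simp [Escale, diagonal_mul_diagonal, mul_comm]
  · simp [Escale, diagonal_mul_diagonal, diagonal_apply_ne _ hxy]

lemma std_mul_diag (i j : Fin n) (c : F) (d : Fin n → F) :
    Matrix.single j i c * diagonal d = Matrix.single j i (c * d i) := by
  ext x y
  rw [mul_diagonal]
  by_cases h1 : j = x <;> by_cases h2 : i = y <;>
    simp [Matrix.single, h1, h2]

lemma diag_mul_std (i j : Fin n) (c : F) (d : Fin n → F) :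
    diagonal d * Matrix.single j i c = Matrix.single j i (d j * c) := by
  ext x y
  rw [diagonal_mul]
  by_cases h1 : j = x <;> by_cases h2 : i = y <;>
    simp [Matrix.single, h1, h2]

lemma Eadd_mul_Escale (i j k : Fin n) (c lam : F) (hl : lam ≠ 0) :
    ∃ c' : F, (c ≠ 0 → c' ≠ 0) ∧
      Eadd i j c * Escale k lam = Escale k lam * Eadd i j c' := by
  set d : Fin n → F := fun t => if t = k then lam else 1 with hd
  have hdi : d i ≠ 0 := by by_cases h : i = k <;> simp [hd, h, hl]
  have hdj : d j ≠ 0 := by by_cases h : j = k <;> simp [hd, h, hl]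
  refine ⟨c * d i / d j, fun hc => div_ne_zero (mul_ne_zero hc hdi) hdj, ?_⟩
  rw [Eadd, Eadd, Escale, add_mul, one_mul, mul_add, mul_one, std_mul_diag, diag_mul_std]
  rw [show d j * (c * d i / d j) = c * d i by field_simp [hdj]]

lemma push_scale : ∀ (l₁ : List (Matrix (Fin n) (Fin n) F)),
    (∀ A ∈ l₁, ∃ i j : Fin n, i ≠ j ∧ A = Pswap i j) →
    ∀ (k : Fin n) (c : F), ∃ k', Escale k c * l₁.prod = l₁.prod * Escale k' c
  | [], _, k, c => ⟨k, by simp⟩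
  | A :: l, h, k, c => by
    obtain ⟨i, j, -, rfl⟩ := h A (List.mem_cons_self ..)
    obtain ⟨k', hk'⟩ := push_scale l (fun B hB => h B (List.mem_cons_of_mem _ hB))
      (Equiv.swap i j k) c
    refine ⟨k', ?_⟩
    rw [List.prod_cons, ← mul_assoc, mul_Pswap i j (Escale k c), Escale_submatrix,
      mul_assoc, hk', mul_assoc]

lemma push_add : ∀ (l₁ : List (Matrix (Fin n) (Fin n) F)),
    (∀ A ∈ l₁, ∃ i j : Fin n, i ≠ j ∧ A = Pswap i j) →
    ∀ (a b : Fin n), a ≠ b → ∀ (c : F),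
      ∃ a' b', a' ≠ b' ∧ Eadd a b c * l₁.prod = l₁.prod * Eadd a' b' c
  | [], _, a, b, hab, c => ⟨a, b, hab, by simp⟩
  | A :: l, h, a, b, hab, c => by
    obtain ⟨i, j, -, rfl⟩ := h A (List.mem_cons_self ..)
    obtain ⟨a', b', hab', hk'⟩ := push_add l (fun B hB => h B (List.mem_cons_of_mem _ hB))
      (Equiv.swap i j a) (Equiv.swap i j b) ((Equiv.injective _).ne hab) c
    refine ⟨a', b', hab', ?_⟩
    rw [List.prod_cons, ← mul_assoc, mul_Pswap i j (Eadd a b c), Eadd_submatrix,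
      mul_assoc, hk', mul_assoc]

lemma push_add_scale : ∀ (L : List (Fin n × F)), (∀ p ∈ L, p.2 ≠ 0) →
    ∀ (a b : Fin n) (c : F), c ≠ 0 →
    ∃ c', c' ≠ 0 ∧ Eadd a b c * (L.map fun p => Escale p.1 p.2).prod
        = (L.map fun p => Escale p.1 p.2).prod * Eadd a b c'
  | [], _, a, b, c, hc => ⟨c, hc, by simp⟩
  | (k, lam) :: L, h, a, b, c, hc => by
    have hlam : lam ≠ 0 := h (k, lam) (List.mem_cons_self ..)
    obtain ⟨c₁, hc₁, hEq⟩ := Eadd_mul_Escale a b k c lam hlam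
    obtain ⟨c', hc', hEq'⟩ := push_add_scale L (fun p hp => h p (List.mem_cons_of_mem _ hp))
      a b c₁ (hc₁ hc)
    refine ⟨c', hc', ?_⟩
    rw [List.map_cons, List.prod_cons, ← mul_assoc, hEq, mul_assoc, hEq', ← mul_assoc]

def insS (i : Fin n) (a : F) : List (Fin n × F) → List (Fin n × F)
  | [] => [(i, a)]
  | (j, b) :: L =>
      if i < j then (i, a) :: (j, b) :: L
      else if i = j then (j, a * b) :: L
      else (j, b) :: insS i a L

lemma insS_length (i : Fin n) (a : F) :
    ∀ L : List (Fin n × F), (insS i a L).length ≤ L.length + 1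
  | [] => by simp [insS]
  | (j, b) :: L => by
    rw [insS]
    split
    · simp
    · split
      · simp
      · simpa using Nat.succ_le_succ (insS_length i a L)

lemma insS_mem (i : Fin n) (a : F) :
    ∀ L : List (Fin n × F), ∀ p ∈ insS i a L, p.1 = i ∨ p ∈ L
  | [] => by simp [insS]
  | (j, b) :: L => by
    rw [insS]
    split
    · intro p hp
      rcases List.mem_cons.1 hp with rfl | hp
      · exact Or.inl rfl
      · exact Or.inr hp
    · split
      · rename_i h1 h2
        intro p hp
        rcases List.mem_cons.1 hp with rfl | hp
        · exact Or.inl h2.symm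
        · exact Or.inr (List.mem_cons_of_mem _ hp)
      · intro p hp
        rcases List.mem_cons.1 hp with rfl | hp
        · exact Or.inr (List.mem_cons_self ..)
        · rcases insS_mem i a L p hp with h | h
          · exact Or.inl h
          · exact Or.inr (List.mem_cons_of_mem _ h)

lemma insS_pairwise (i : Fin n) (a : F) :
    ∀ L : List (Fin n × F), L.Pairwise (fun p q => p.1 < q.1) →
      (insS i a L).Pairwise (fun p q => p.1 < q.1)
  | [], _ => by simp [insS]
  | (j, b) :: L, hL => by
    rw [List.pairwise_cons] at hL
    obtain ⟨h1, h2⟩ := hL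
    rw [insS]
    split
    · rename_i hij
      refine List.pairwise_cons.2 ⟨?_, List.pairwise_cons.2 ⟨h1, h2⟩⟩
      intro p hp
      rcases List.mem_cons.1 hp with rfl | hp
      · exact hij
      · exact hij.trans (h1 p hp)
    · split
      · exact List.pairwise_cons.2 ⟨h1, h2⟩
      · rename_i hij hne
        have hji : j < i := by
          rcases lt_trichotomy i j with h | h | h
          · exact absurd h hij
          · exact absurd h hne
          · exact h
        refine List.pairwise_cons.2 ⟨?_, insS_pairwise i a L h2⟩
        intro p hp
        rcases insS_mem i a L p hp with h | h
        · rw [h]; exact hji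
        · exact h1 p h

lemma insS_ne_zero (i : Fin n) {a : F} (ha : a ≠ 0) :
    ∀ L : List (Fin n × F), (∀ p ∈ L, p.2 ≠ 0) →
      ∀ p ∈ insS i a L, p.2 ≠ 0
  | [], _ => by simp [insS, ha]
  | (j, b) :: L, h => by
    rw [insS]
    split
    · intro p hp
      rcases List.mem_cons.1 hp with rfl | hp
      · exact ha
      · exact h p hp
    · split
      · intro p hp
        rcases List.mem_cons.1 hp with rfl | hp
        · exact mul_ne_zero ha (h (j, b) (List.mem_cons_self ..))
        · exact h p (List.mem_cons_of_mem _ hp)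
      · intro p hp
        rcases List.mem_cons.1 hp with rfl | hp
        · exact h (j, b) (List.mem_cons_self ..)
        · exact insS_ne_zero i ha L (fun q hq => h q (List.mem_cons_of_mem _ hq)) p hp

lemma insS_prod (i : Fin n) (a : F) :
    ∀ L : List (Fin n × F),
      ((insS i a L).map fun p => Escale p.1 p.2).prod
        = Escale i a * (L.map fun p => Escale p.1 p.2).prod
  | [] => by simp [insS]
  | (j, b) :: L => by
    rw [insS]
    split
    · simp [List.prod_cons]
    · split
      · rename_i h1 h2
        subst h2
        simp only [List.map_cons, List.prod_cons, ← mul_assoc, Escale_mul_Escale]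
      · simp only [List.map_cons, List.prod_cons, insS_prod i a L, ← mul_assoc,
          Escale_comm]


lemma aux_canon : ∀ (l : List (Matrix (Fin n) (Fin n) F)), (∀ A ∈ l, IsElementary A) →
    ∃ (l₁ : List (Matrix (Fin n) (Fin n) F)) (L₂ : List (Fin n × F))
      (l₃ : List (Matrix (Fin n) (Fin n) F)),
      (∀ A ∈ l₁, ∃ i j : Fin n, i ≠ j ∧ A = Pswap i j) ∧
      L₂.Pairwise (fun p q => p.1 < q.1) ∧ (∀ p ∈ L₂, p.2 ≠ 0) ∧
      (∀ A ∈ l₃, ∃ (i j : Fin n) (c : F), i ≠ j ∧ c ≠ 0 ∧ A = Eadd i j c) ∧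
      l₁.length + L₂.length + l₃.length ≤ l.length ∧
      (l₁ ++ (L₂.map fun p => Escale p.1 p.2) ++ l₃).prod = l.prod
  | [], _ => ⟨[], [], [], by simp, by simp, by simp, by simp, by simp, by simp⟩
  | A :: l, h => by
    obtain ⟨l₁, L₂, l₃, h1, h2, h3, h4, hlen, hprod⟩ :=
      aux_canon l (fun B hB => h B (List.mem_cons_of_mem _ hB))
    rcases h A (List.mem_cons_self ..) with ⟨i, j, hij, rfl⟩ | ⟨i, c, hc, rfl⟩ |
      ⟨i, j, c, hij, hc, rfl⟩
    · refine ⟨Pswap i j :: l₁, L₂, l₃, ?_, h2, h3, h4, ?_, ?_⟩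
      · intro B hB
        rcases List.mem_cons.1 hB with rfl | hB
        · exact ⟨i, j, hij, rfl⟩
        · exact h1 B hB
      · simp only [List.length_cons]; omega
      · simp only [List.cons_append, List.prod_cons, hprod]
    · obtain ⟨k', hk'⟩ := push_scale l₁ h1 i c
      refine ⟨l₁, insS k' c L₂, l₃, h1, insS_pairwise k' c L₂ h2,
        insS_ne_zero k' hc L₂ h3, h4, ?_, ?_⟩
      · have := insS_length k' c L₂
        simp only [List.length_cons]
        omega
      · rw [List.prod_cons, ← hprod]
        simp only [List.prod_append, insS_prod]
        rw [← mul_assoc l₁.prod (Escale k' c), ← hk']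
        simp only [mul_assoc]
    · obtain ⟨a', b', hab', hpa⟩ := push_add l₁ h1 i j hij c
      obtain ⟨c', hc', hpb⟩ := push_add_scale L₂ h3 a' b' c hc
      refine ⟨l₁, L₂, Eadd a' b' c' :: l₃, h1, h2, h3, ?_, ?_, ?_⟩
      · intro B hB
        rcases List.mem_cons.1 hB with rfl | hB
        · exact ⟨a', b', c', hab', hc', rfl⟩
        · exact h4 B hB
      · simp only [List.length_cons]; omega
      · rw [List.prod_cons, ← hprod]
        simp only [List.prod_append, List.prod_cons]
        calc l₁.prod * (L₂.map fun p => Escale p.1 p.2).prod * (Eadd a' b' c' * l₃.prod)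
            = l₁.prod * ((L₂.map fun p => Escale p.1 p.2).prod * Eadd a' b' c') * l₃.prod := by
              simp only [mul_assoc]
          _ = l₁.prod * (Eadd a' b' c * (L₂.map fun p => Escale p.1 p.2).prod) * l₃.prod := by
              rw [hpb]
          _ = Eadd i j c *
              (l₁.prod * (L₂.map fun p => Escale p.1 p.2).prod * l₃.prod) := by
              rw [← mul_assoc l₁.prod (Eadd a' b' c), ← hpa]
              simp only [mul_assoc]

end Aux

/-- Every product of elementary matrices equals a product, of no greater length, in
which first come transposition matrices, then row scalings with strictly increasing
indices, and then transvections. -/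
theorem exists_canonical_product {F : Type*} [Field F] {n : ℕ}
    (l : List (Matrix (Fin n) (Fin n) F)) (hl : ∀ A ∈ l, IsElementary A) :
    ∃ (l₁ l₂ l₃ : List (Matrix (Fin n) (Fin n) F)),
      (∀ A ∈ l₁, ∃ i j : Fin n, i ≠ j ∧ A = Pswap i j) ∧
      (∃ (m : ℕ) (idx : Fin m → Fin n) (c : Fin m → F),
        StrictMono idx ∧ (∀ t, c t ≠ 0) ∧
        l₂ = List.ofFn (fun t => Escale (idx t) (c t))) ∧
      (∀ A ∈ l₃, ∃ (i j : Fin n) (c : F), i ≠ j ∧ c ≠ 0 ∧ A = Eadd i j c) ∧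
      l₁.length + l₂.length + l₃.length ≤ l.length ∧
      (l₁ ++ l₂ ++ l₃).prod = l.prod := by
  obtain ⟨l₁, L₂, l₃, h1, h2, h3, h4, hlen, hprod⟩ := aux_canon l hl
  refine ⟨l₁, L₂.map fun p => Escale p.1 p.2, l₃, h1, ?_, h4, by simpa using hlen, hprod⟩
  refine ⟨L₂.length, fun t => (L₂.get t).1, fun t => (L₂.get t).2, ?_, ?_, ?_⟩
  · intro s t hst
    exact List.pairwise_iff_get.1 h2 s t hst
  · intro t
    exact h3 _ (List.get_mem L₂ t)
  · exact (List.ofFn_getElem_eq_map L₂ fun p => Escale p.1 p.2).symm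
end
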